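/- For any norm-convex metric space (Z,ρ) and any α > 0, the outer scale satisfies s̄(Z,α) ≤ 3·s(Z,α)·(1 + ln(diam(Z)/s(Z,α))). -/

import Mathlib

open Metric MeasureTheory ENNReal Set

noncomputable def pack {Z : Type*} (ρ : Z → Z → ℝ) (B : Set Z) (ε : ℝ) : ℝ≥0∞ :=
  ⨆ (N : Finset Z) (_ : ↑N ⊆ B ∧ (↑N : Set Z).Pairwise fun a b => ε < ρ a b),
    (N.card : ℝ≥0∞)

def mball {Z : Type*} (ρ : Z → Z → ℝ) (x : Z) (r : ℝ) : Set Z := {y | ρ x y ≤ r}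

noncomputable def entScale {Z : Type*} (ρ₁ ρ₂ : Z → Z → ℝ) (α : ℝ) : ℝ :=
  sInf {s : ℝ | 0 < s ∧ ∀ x : Z, ∀ r : ℝ, 0 < r →
    pack ρ₂ (mball ρ₁ x r) s ≤ ENNReal.ofReal (Real.exp (α * r))}

noncomputable def diamScale {Z : Type*} (ρ₁ ρ₂ : Z → Z → ℝ) (α : ℝ) : ℝ :=
  sInf {s : ℝ | 0 < s ∧ ∀ x : Z, ∀ r : ℝ, 0 < r →
    ∀ y ∈ mball ρ₁ x r, ∀ z ∈ mball ρ₁ x r, ρ₂ y z ≤ Real.exp (α * r) * s}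

noncomputable def dblScale {Z : Type*} (ρ : Z → Z → ℝ) (α : ℝ) : ℝ :=
  sInf {s : ℝ | 0 < s ∧ ∀ x : Z,
    pack ρ (mball ρ x (2 * s)) s ≤ ENNReal.ofReal (Real.exp (2 * α * s))}

noncomputable def outScale {Z : Type*} (ρ : Z → Z → ℝ) (α : ℝ) : ℝ :=
  sInf {t : ℝ | ∃ γ : ℝ, 0 < γ ∧
    t = γ + (1 / α) * Real.log (pack ρ Set.univ γ).toReal}

def IsMetric {Z : Type*} (ρ : Z → Z → ℝ) : Prop :=
  (∀ x y, ρ x y = 0 ↔ x = y) ∧ (∀ x y, ρ x y = ρ y x) ∧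
    ∀ x y z, ρ x z ≤ ρ x y + ρ y z

def IsUltrametric' {Z : Type*} (ρ : Z → Z → ℝ) : Prop :=
  ∀ x y z, ρ x z ≤ max (ρ x y) (ρ y z)

def MetricPrivate {Z : Type*} [MeasurableSpace Z] (ρ₁ : Z → Z → ℝ) (α : ℝ)
    (M : Z → Measure Z) : Prop :=
  (∀ x, IsProbabilityMeasure (M x)) ∧
    ∀ x x' : Z, ∀ S : Set Z,
      M x S ≤ ENNReal.ofReal (Real.exp (α * ρ₁ x x')) * M x' S

noncomputable def accuracy {Z : Type*} [MeasurableSpace Z] (ρ₁ ρ₂ : Z → Z → ℝ)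
    (α : ℝ) : ℝ≥0∞ :=
  ⨅ (M : Z → Measure Z) (_ : MetricPrivate ρ₁ α M),
    ⨆ x : Z, ∫⁻ y, ENNReal.ofReal (ρ₂ y x) ∂(M x)

noncomputable def dEntScale (Z : Type*) [MetricSpace Z] (α : ℝ) : ℝ :=
  entScale (fun a b : Z => dist a b) (fun a b : Z => dist a b) α

lemma pack_le_iff {Z : Type*} {ρ : Z → Z → ℝ} {B : Set Z} {ε : ℝ} {c : ℝ≥0∞} :
    pack ρ B ε ≤ c ↔ ∀ N : Finset Z, ↑N ⊆ B → ((↑N : Set Z).Pairwise fun a b => ε < ρ a b) →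
      (N.card : ℝ≥0∞) ≤ c := by
  simp [pack, iSup_le_iff, and_imp]

lemma card_le_pack {Z : Type*} {ρ : Z → Z → ℝ} {B : Set Z} {ε : ℝ} {N : Finset Z}
    (h1 : ↑N ⊆ B) (h2 : (↑N : Set Z).Pairwise fun a b => ε < ρ a b) :
    (N.card : ℝ≥0∞) ≤ pack ρ B ε :=
  le_iSup₂ (f := fun (N : Finset Z)
    (_ : ↑N ⊆ B ∧ (↑N : Set Z).Pairwise fun a b => ε < ρ a b) => (N.card : ℝ≥0∞)) N ⟨h1, h2⟩

lemma log_toReal_pack_nonneg {Z : Type*} {ρ : Z → Z → ℝ} {B : Set Z} {ε : ℝ} :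
    0 ≤ Real.log (pack ρ B ε).toReal := by
  rcases eq_or_ne (pack ρ B ε) ∞ with h | h
  · simp [h]
  rcases lt_or_ge (pack ρ B ε) 1 with h1 | h1
  · have hle : pack ρ B ε ≤ 0 := pack_le_iff.mpr fun N hN1 hN2 => by
      have h2 := (card_le_pack hN1 hN2).trans_lt h1
      have h3 : N.card = 0 := by exact_mod_cast Nat.lt_one_iff.mp (by exact_mod_cast h2)
      simp [h3]
    simp [le_antisymm hle zero_le]
  · have : (1:ℝ) ≤ (pack ρ B ε).toReal := by
      rw [← ENNReal.toReal_one]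
      exact ENNReal.toReal_mono h h1
    exact Real.log_nonneg this

lemma stmt9_arith (k : ℕ) (L s0 : ℝ) (hL : 0 ≤ L) (hs0pos : 0 < s0)
    (hkL : ((k:ℝ) - 1) * Real.log 2 < L) (hk1 : (1:ℝ) ≤ (k:ℝ)) :
    s0 + 2*s0*(k:ℝ) ≤ s0 * (3 + 3*L) := by
  have hlog2 : (0.6931471803:ℝ) < Real.log 2 := Real.log_two_gt_d9
  have e1 : 2*((k:ℝ)-1)*Real.log 2 ≤ 2*L := by nlinarith [hkL]
  have e2 : 2*L ≤ 3*L*Real.log 2 := by nlinarith [hL, hlog2]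
  have e3 : 2*((k:ℝ)-1) ≤ 3*L := by nlinarith [e1, e2, hlog2, hk1]
  nlinarith [mul_le_mul_of_nonneg_left e3 hs0pos.le, hs0pos]
theorem stmt9 {E : Type*} [NormedAddCommGroup E] [NormedSpace ℝ E] (Z : Set E)
    (hZ : Convex ℝ Z) (α : ℝ) (hα : 0 < α) (hbdd : Bornology.IsBounded Z)
    (hs : 0 < entScale (fun a b : Z => dist (a : E) b) (fun a b : Z => dist (a : E) b) α) :
    outScale (fun a b : Z => dist (a : E) b) α ≤
      3 * entScale (fun a b : Z => dist (a : E) b) (fun a b : Z => dist (a : E) b) α *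
        (1 + Real.log (Metric.diam Z /
          entScale (fun a b : Z => dist (a : E) b) (fun a b : Z => dist (a : E) b) α)) := by
  classical
  set ρ : ↥Z → ↥Z → ℝ := fun a b => dist (a : E) b with hρ
  set D : ℝ := Metric.diam Z with hDdef
  set S : Set ℝ := {s : ℝ | 0 < s ∧ ∀ x : ↥Z, ∀ r : ℝ, 0 < r →
    pack ρ (mball ρ x r) s ≤ ENNReal.ofReal (Real.exp (α * r))} with hSdef
  have hent : entScale ρ ρ α = sInf S := rfl
  rw [hent] at hs ⊢
  have hbdS : BddBelow S := ⟨0, fun x hx => hx.1.le⟩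
  have hSne : S.Nonempty := by
    by_contra h
    rw [Set.not_nonempty_iff_eq_empty] at h
    rw [h, Real.sInf_empty] at hs
    exact lt_irrefl 0 hs
  have hρsymm : ∀ a b : ↥Z, ρ a b = ρ b a := fun a b => dist_comm _ _
  have hdistle : ∀ a b : ↥Z, ρ a b ≤ D := fun a b =>
    Metric.dist_le_diam_of_mem hbdd a.2 b.2
  have hcard1 : ∀ c : ℝ, D ≤ c → ∀ N : Finset ↥Z,
      ((↑N : Set ↥Z).Pairwise fun a b => c < ρ a b) → N.card ≤ 1 := by
    intro c hc N hN
    refine Finset.card_le_one.mpr fun a ha b hb => ?_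
    by_contra hab
    exact absurd (hN (Finset.mem_coe.mpr ha) (Finset.mem_coe.mpr hb) hab)
      (not_lt.mpr ((hdistle a b).trans hc))
  have hone : ∀ r : ℝ, 0 < r → (1:ℝ≥0∞) ≤ ENNReal.ofReal (Real.exp (α * r)) := fun r hr =>
    ENNReal.one_le_ofReal.mpr (Real.one_le_exp (by positivity))
  have hDpos : 0 < D := by
    by_contra hD0
    push_neg at hD0
    have hall : ∀ t : ℝ, 0 < t → t ∈ S := by
      intro t ht
      refine ⟨ht, fun x r hr => pack_le_iff.mpr fun N h1 h2 => le_trans ?_ (hone r hr)⟩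
      exact_mod_cast Nat.cast_le.mpr (hcard1 t (by linarith) N h2)
    have hle : ∀ t : ℝ, 0 < t → sInf S ≤ t := fun t ht => csInf_le hbdS (hall t ht)
    have : sInf S ≤ 0 := le_of_forall_pos_le_add fun ε hε => by simpa using hle ε hε
    linarith
  have hDS : D ∈ S := by
    refine ⟨hDpos, fun x r hr => pack_le_iff.mpr fun N h1 h2 => le_trans ?_ (hone r hr)⟩
    exact_mod_cast Nat.cast_le.mpr (hcard1 D le_rfl N h2)
  have hsD : sInf S ≤ D := csInf_le hbdS hDS
  have hDdiv : 1 ≤ D / sInf S := (one_le_div hs).mpr hsD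
  set L : ℝ := Real.log (D / sInf S) with hLdef
  have hL : 0 ≤ L := Real.log_nonneg hDdiv
  have hC : (0:ℝ) < 3 + 3 * L := by linarith
  -- main estimate for each s0 ∈ S
  have key : ∀ s0 ∈ S, outScale ρ α ≤ s0 * (3 + 3 * L) := by
    intro s0 hs0S
    obtain ⟨hs0pos, hs0pack⟩ := hs0S
    have hss0 : sInf S ≤ s0 := csInf_le hbdS ⟨hs0pos, hs0pack⟩
    -- scaling lemma (convexity)
    have hscale : ∀ x : ↥Z, ∀ γ : ℝ, s0 ≤ γ →
        pack ρ (mball ρ x (2*γ)) γ ≤ ENNReal.ofReal (Real.exp (2*α*s0)) := by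
      intro x γ hγ
      have hγpos : 0 < γ := lt_of_lt_of_le hs0pos hγ
      set l : ℝ := s0 / γ with hldef
      have hl0 : 0 < l := div_pos hs0pos hγpos
      have hl1 : l ≤ 1 := (div_le_one hγpos).mpr hγ
      have hlγ : l * γ = s0 := div_mul_cancel₀ _ hγpos.ne'
      set g : ↥Z → ↥Z := fun p => ⟨(1-l) • (x:E) + l • (p:E),
        hZ x.2 p.2 (by linarith) hl0.le (by ring)⟩ with hgdef
      have hgdist : ∀ p q : ↥Z, ρ (g p) (g q) = l * ρ p q := by
        intro p q
        show dist ((1-l) • (x:E) + l • (p:E)) ((1-l) • (x:E) + l • (q:E))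
          = l * dist (p:E) (q:E)
        rw [dist_eq_norm, dist_eq_norm]
        have h : ((1-l) • (x:E) + l • (p:E)) - ((1-l) • (x:E) + l • (q:E))
            = l • ((p:E) - (q:E)) := by module
        rw [h, norm_smul, Real.norm_of_nonneg hl0.le]
      have hgx : ∀ p : ↥Z, ρ x (g p) = l * ρ x p := by
        intro p
        show dist (x:E) ((1-l) • (x:E) + l • (p:E)) = l * dist (x:E) (p:E)
        rw [dist_eq_norm, dist_eq_norm]
        have h : (x:E) - ((1-l) • (x:E) + l • (p:E)) = l • ((x:E) - (p:E)) := by module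
        rw [h, norm_smul, Real.norm_of_nonneg hl0.le]
      have hginj : Function.Injective g := by
        intro p q hpq
        have h0 : l * ρ p q = 0 := by rw [← hgdist p q, hpq]; exact dist_self _
        have h1 : ρ p q = 0 := by
          rcases mul_eq_zero.mp h0 with h | h
          · exact absurd h hl0.ne'
          · exact h
        exact Subtype.ext (dist_eq_zero.mp h1)
      refine pack_le_iff.mpr fun N h1 h2 => ?_
      have himg : ↑(N.image g) ⊆ mball ρ x (2*s0) := by
        intro y hy
        simp only [Finset.coe_image, Set.mem_image, Finset.mem_coe] at hy
        obtain ⟨p, hp, rfl⟩ := hy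
        have hpx : ρ x p ≤ 2*γ := h1 (Finset.mem_coe.mpr hp)
        show ρ x (g p) ≤ 2*s0
        rw [hgx p]
        calc l * ρ x p ≤ l * (2*γ) := mul_le_mul_of_nonneg_left hpx hl0.le
          _ = 2*s0 := by linear_combination 2*hlγ
      have hpw : (↑(N.image g) : Set ↥Z).Pairwise fun a b => s0 < ρ a b := by
        intro a ha b hb hab
        simp only [Finset.coe_image, Set.mem_image, Finset.mem_coe] at ha hb
        obtain ⟨p, hp, rfl⟩ := ha
        obtain ⟨q, hq, rfl⟩ := hb
        have hpq : p ≠ q := fun h => hab (by rw [h])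
        have hlt : γ < ρ p q := h2 (Finset.mem_coe.mpr hp) (Finset.mem_coe.mpr hq) hpq
        rw [hgdist]
        calc s0 = l * γ := hlγ.symm
          _ < l * ρ p q := by exact mul_lt_mul_of_pos_left hlt hl0
      calc (N.card : ℝ≥0∞) = ((N.image g).card : ℝ≥0∞) := by
            rw [Finset.card_image_of_injective _ hginj]
        _ ≤ pack ρ (mball ρ x (2*s0)) s0 := card_le_pack himg hpw
        _ ≤ ENNReal.ofReal (Real.exp (α * (2*s0))) := hs0pack x (2*s0) (by linarith)
        _ = ENNReal.ofReal (Real.exp (2*α*s0)) := by ring_nf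
    set Ee : ℝ := Real.exp (2*α*s0) with hEedef
    have hEpos : 0 < Ee := Real.exp_pos _
    have hcluster : ∀ (q : ↥Z) (γ : ℝ), s0 ≤ γ → ∀ N : Finset ↥Z,
        (↑N : Set ↥Z) ⊆ mball ρ q (2*γ) →
        ((↑N : Set ↥Z).Pairwise fun a b => γ < ρ a b) → (N.card : ℝ) ≤ Ee := by
      intro q γ hγ N h1 h2
      have h := (card_le_pack h1 h2).trans (hscale q γ hγ)
      have h3 := ENNReal.toReal_le_of_le_ofReal (Real.exp_pos _).le h
      simpa using h3
    -- chaining induction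
    have ind : ∀ k : ℕ, ∀ γ : ℝ, s0 ≤ γ → D ≤ 2^k * γ →
        ∀ P : Finset ↥Z, ((↑P : Set ↥Z).Pairwise fun a b => γ < ρ a b) →
        (P.card : ℝ) ≤ Ee ^ k := by
      intro k
      induction k with
      | zero =>
        intro γ hγ hDγ P hP
        simp only [pow_zero]
        have h := hcard1 γ (by simpa using hDγ) P hP
        exact_mod_cast h
      | succ k IH =>
        intro γ hγ hDγ P hP
        have hγpos : 0 < γ := lt_of_lt_of_le hs0pos hγ
        obtain ⟨Q, hQmem, hQmax⟩ := Finset.exists_max_image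
          (P.powerset.filter fun Q : Finset ↥Z =>
            (Q : Set ↥Z).Pairwise fun a b => 2*γ < ρ a b)
          (fun Q : Finset ↥Z => Q.card) ⟨∅, by simp⟩
        rw [Finset.mem_filter, Finset.mem_powerset] at hQmem
        obtain ⟨hQP, hQsep⟩ := hQmem
        have hnet : ∀ p ∈ P, ∃ q ∈ Q, ρ q p ≤ 2*γ := by
          intro p hp
          by_contra hcon
          push_neg at hcon
          have hpQ : p ∉ Q := by
            intro h
            have h1 := hcon p h
            have h2 : ρ p p = 0 := dist_self _
            linarith
          have hins : ((↑(insert p Q) : Set ↥Z).Pairwise fun a b => 2*γ < ρ a b) := by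
            rw [Finset.coe_insert, Set.pairwise_insert]
            refine ⟨hQsep, fun q hq _ => ⟨?_, hcon q (Finset.mem_coe.mp hq)⟩⟩
            rw [hρsymm p q]
            exact hcon q (Finset.mem_coe.mp hq)
          have hle : (insert p Q).card ≤ Q.card := hQmax _ (Finset.mem_filter.mpr
            ⟨Finset.mem_powerset.mpr (Finset.insert_subset hp hQP), hins⟩)
          rw [Finset.card_insert_of_notMem hpQ] at hle
          omega
        have hsub : P ⊆ Q.biUnion (fun q => P.filter fun p => ρ q p ≤ 2*γ) := by
          intro p hp
          obtain ⟨q, hq, hqp⟩ := hnet p hp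
          exact Finset.mem_biUnion.mpr ⟨q, hq, Finset.mem_filter.mpr ⟨hp, hqp⟩⟩
        have hcount : (P.card : ℝ) ≤ (Q.card : ℝ) * Ee := by
          have h1 : P.card ≤ ∑ q ∈ Q, (P.filter fun p => ρ q p ≤ 2*γ).card :=
            (Finset.card_le_card hsub).trans Finset.card_biUnion_le
          have h2 : ∑ q ∈ Q, ((P.filter fun p => ρ q p ≤ 2*γ).card : ℝ) ≤ ∑ _q ∈ Q, Ee := by
            refine Finset.sum_le_sum fun q hq => ?_
            refine hcluster q γ hγ _ ?_ ?_
            · intro y hy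
              exact (Finset.mem_filter.mp (Finset.mem_coe.mp hy)).2
            · exact hP.mono (Finset.coe_subset.mpr (Finset.filter_subset _ _))
          calc (P.card : ℝ) ≤ ∑ q ∈ Q, ((P.filter fun p => ρ q p ≤ 2*γ).card : ℝ) := by
                exact_mod_cast h1
            _ ≤ ∑ _q ∈ Q, Ee := h2
            _ = (Q.card : ℝ) * Ee := by rw [Finset.sum_const, nsmul_eq_mul]
        have hQcard : (Q.card : ℝ) ≤ Ee ^ k := by
          refine IH (2*γ) (by linarith) ?_ Q hQsep
          rw [pow_succ] at hDγ
          nlinarith [hDγ]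
        calc (P.card : ℝ) ≤ (Q.card : ℝ) * Ee := hcount
          _ ≤ Ee ^ k * Ee := mul_le_mul_of_nonneg_right hQcard hEpos.le
          _ = Ee ^ (k+1) := (pow_succ Ee k).symm
    -- choose minimal k
    have hex : ∃ k : ℕ, D ≤ 2^k * s0 := by
      obtain ⟨n, hn⟩ := pow_unbounded_of_one_lt (D / s0) (by norm_num : (1:ℝ) < 2)
      refine ⟨n, ?_⟩
      rw [div_lt_iff₀ hs0pos] at hn
      linarith
    obtain ⟨k, hkk, hkmin⟩ : ∃ k : ℕ, D ≤ 2^k * s0 ∧ ∀ j < k, ¬ D ≤ 2^j * s0 :=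
      ⟨Nat.find hex, Nat.find_spec hex, fun j hj => Nat.find_min hex hj⟩
    have hpack : pack ρ Set.univ s0 ≤ ENNReal.ofReal (Ee ^ k) := by
      refine pack_le_iff.mpr fun N _ h2 => ?_
      have h := ind k s0 le_rfl hkk N h2
      calc (N.card : ℝ≥0∞) = ENNReal.ofReal (N.card : ℝ) := by rw [ENNReal.ofReal_natCast]
        _ ≤ ENNReal.ofReal (Ee^k) := ENNReal.ofReal_le_ofReal h
    have htR : (pack ρ Set.univ s0).toReal ≤ Ee ^ k :=
      ENNReal.toReal_le_of_le_ofReal (by positivity) hpack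
    have hlog : Real.log (pack ρ Set.univ s0).toReal ≤ (k:ℝ) * (2*α*s0) := by
      rcases eq_or_lt_of_le (ENNReal.toReal_nonneg :
          0 ≤ (pack ρ Set.univ s0).toReal) with h0 | h0
      · rw [← h0, Real.log_zero]; positivity
      · calc Real.log (pack ρ Set.univ s0).toReal ≤ Real.log (Ee^k) :=
              Real.log_le_log h0 htR
          _ = (k:ℝ) * (2*α*s0) := by rw [hEedef, Real.log_pow, Real.log_exp]
    have hout : outScale ρ α ≤ s0 + (1/α) * Real.log (pack ρ Set.univ s0).toReal := by
      have houtdef : outScale ρ α = sInf {t : ℝ | ∃ γ : ℝ, 0 < γ ∧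
          t = γ + (1 / α) * Real.log (pack ρ Set.univ γ).toReal} := rfl
      rw [houtdef]
      refine csInf_le ⟨0, fun t ht => ?_⟩ ⟨s0, hs0pos, rfl⟩
      obtain ⟨γ, hγ, rfl⟩ := ht
      have hlog0 := log_toReal_pack_nonneg (ρ := ρ) (B := Set.univ) (ε := γ)
      have : 0 ≤ (1/α) * Real.log (pack ρ Set.univ γ).toReal :=
        mul_nonneg (by positivity) hlog0
      linarith
    have hout2 : outScale ρ α ≤ s0 + 2*s0*(k:ℝ) := by
      have h1 : (1/α) * Real.log (pack ρ Set.univ s0).toReal ≤ (1/α) * ((k:ℝ) * (2*α*s0)) :=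
        mul_le_mul_of_nonneg_left hlog (by positivity)
      have h2 : (1/α) * ((k:ℝ) * (2*α*s0)) = 2*s0*(k:ℝ) := by
        field_simp
      linarith [hout]
    -- bound k
    have hkb : s0 + 2*s0*(k:ℝ) ≤ s0 * (3 + 3*L) := by
      rcases Nat.eq_zero_or_pos k with h0 | h0
      · rw [h0]
        push_cast
        nlinarith [hL, hs0pos]
      · have hmin : ¬ (D ≤ 2^(k-1) * s0) := hkmin (k-1) (Nat.sub_lt h0 one_pos)
        push_neg at hmin
        have h2k : (2:ℝ)^(k-1) < D / s0 := (lt_div_iff₀ hs0pos).mpr hmin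
        have hlt : ((k-1 : ℕ):ℝ) * Real.log 2 < Real.log (D / s0) := by
          have h := Real.log_lt_log (by positivity) h2k
          rwa [Real.log_pow] at h
        have hcast : ((k-1 : ℕ):ℝ) = (k:ℝ) - 1 := by
          rw [Nat.cast_sub h0]
          norm_num
        rw [hcast] at hlt
        have hL' : Real.log (D / s0) ≤ L := by
          rw [hLdef]
          exact Real.log_le_log (by positivity) (div_le_div_of_nonneg_left hDpos.le hs hss0)
        have hlog2 : (0.6931471803:ℝ) < Real.log 2 := Real.log_two_gt_d9
        have hkL : ((k:ℝ) - 1) * Real.log 2 < L := lt_of_lt_of_le hlt hL'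
        have hk1 : (1:ℝ) ≤ (k:ℝ) := by exact_mod_cast h0
        exact stmt9_arith k L s0 hL hs0pos hkL hk1
    calc outScale ρ α ≤ s0 + 2*s0*(k:ℝ) := hout2
      _ ≤ s0 * (3 + 3*L) := hkb
  -- take s0 → sInf S
  have final : outScale ρ α ≤ sInf S * (3 + 3*L) := by
    refine le_of_forall_pos_le_add fun δ hδ => ?_
    obtain ⟨s0, hs0S, hs0lt⟩ := exists_lt_of_csInf_lt hSne
      (lt_add_of_pos_right (sInf S) (show (0:ℝ) < δ / (3+3*L) by positivity))
    calc outScale ρ α ≤ s0 * (3 + 3*L) := key s0 hs0S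
      _ ≤ (sInf S + δ/(3+3*L)) * (3 + 3*L) := mul_le_mul_of_nonneg_right hs0lt.le hC.le
      _ = sInf S * (3+3*L) + δ := by field_simp
  have heq : 3 * sInf S * (1 + L) = sInf S * (3 + 3*L) := by ring
  rw [heq]
  exact final
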